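/- Let P₁, P₂ ∈ ℝ^{p×p} be orthogonal projection matrices (Pᵢᵀ = Pᵢ, Pᵢ² = Pᵢ) with ranges C₁, C₂ ⊆ ℝ^p, and let 0 ≤ ω < 1. Suppose that for every N ∈ ℝ^{p×p} with ‖N‖₂ ≤ 1 one has ‖(I−P₁)N(I−P₁) − (I−P₂)N(I−P₂)‖₂ ≤ ω, i.e. ρ(T(C₁), T(C₂)) ≤ ω. Then ‖P₁ − P₂‖₂ ≤ ω. -/
import Mathlib


open Matrix

noncomputable section

/-- The spectral norm (ℓ² → ℓ² operator norm) of a real square matrix. -/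
def spec {n : Type*} [Fintype n] [DecidableEq n] (M : Matrix n n ℝ) : ℝ :=
  ‖Matrix.toEuclideanCLM (𝕜 := ℝ) M‖

/-- **Lemma.** If the distance between the tangent spaces associated to two orthogonal
projections `P₁, P₂` is at most `ω < 1`, then `‖P₁ − P₂‖₂ ≤ ω`. -/
theorem proj_dist_le_of_tangent_dist
    (p : ℕ) (P₁ P₂ : Matrix (Fin p) (Fin p) ℝ) (ω : ℝ)
    (h1sym : P₁ᵀ = P₁) (h1idem : P₁ * P₁ = P₁)
    (h2sym : P₂ᵀ = P₂) (h2idem : P₂ * P₂ = P₂)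
    (hω0 : 0 ≤ ω) (hω1 : ω < 1)
    (hρ : ∀ N : Matrix (Fin p) (Fin p) ℝ, spec N ≤ 1 →
      spec ((1 - P₁) * N * (1 - P₁) - (1 - P₂) * N * (1 - P₂)) ≤ ω) :
    spec (P₁ - P₂) ≤ ω := by
  have hone : spec (1 : Matrix (Fin p) (Fin p) ℝ) ≤ 1 := by
    rw [spec, _root_.map_one]
    rw [ContinuousLinearMap.one_def]; exact ContinuousLinearMap.norm_id_le
  have h := hρ 1 hone
  have key : (1 - P₁) * 1 * (1 - P₁) - (1 - P₂) * 1 * (1 - P₂) = P₂ - P₁ := by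
    have e1 : (1 - P₁) * 1 * (1 - P₁) = 1 - P₁ := by
      rw [mul_one, sub_mul, one_mul, mul_sub, mul_one, h1idem]; abel
    have e2 : (1 - P₂) * 1 * (1 - P₂) = 1 - P₂ := by
      rw [mul_one, sub_mul, one_mul, mul_sub, mul_one, h2idem]; abel
    rw [e1, e2]; abel
  rw [key] at h
  have : spec (P₁ - P₂) = spec (P₂ - P₁) := by
    simp only [spec]
    rw [show P₁ - P₂ = -(P₂ - P₁) from (neg_sub _ _).symm, map_neg, norm_neg]
  rw [this]; exact h
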